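/- arXiv:2602.09967 — 2 statements merged into one kernel-verified Lean document; each statement's English description precedes it below -/
import Mathlib

section
/- (Corollary: joint characterization of IR ∩ IC for submodular retentions.) Suppose the menu's retentions are submodular, i.e. r_θ(l) is nonincreasing in θ for every l ∈ [0,L̄]. Then the menu (r_θ, p_θ)_{θ∈Θ} is both individually rational and incentive compatible if and only if all of the following hold: (1) for every θ ∈ Θ, p_θ = p_{θ̲} + ∫₀^{L̄} (1 − g_{θ̲}(F_{θ̲}(l))) r_{θ̲}(l) dl − ∫_{θ̲}^{θ} ∫₀^{L̄} D(s,l) r_s(l) dl ds − ∫₀^{L̄} (1 − g_θ(F_θ(l))) r_θ(l) dl; (2) p_{θ̲} ≤ ∫₀^{L̄} (1 − g_{θ̲}(F_{θ̲}(l))) (1 − r_{θ̲}(l)) dl; and (3) ∫_Θ V_θ(r_θ, p_θ) dμ ≥ 0. -/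
open MeasureTheory

section Aux
open MeasureTheory Set Function Topology intervalIntegral

lemma aux_intervalIntegrable {f : ℝ → ℝ} {a b M : ℝ} (hf : Measurable f)
    (hM : ∀ x ∈ Set.uIoc a b, |f x| ≤ M) : IntervalIntegrable f volume a b := by
  rw [intervalIntegrable_iff]
  have hc : IntegrableOn (fun _ : ℝ => M) (Set.uIoc a b) volume :=
    integrableOn_const measure_Ioc_lt_top.ne
  refine hc.mono' hf.aestronglyMeasurable ?_
  filter_upwards [ae_restrict_mem measurableSet_uIoc] with x hx
  simpa [Real.norm_eq_abs] using hM x hx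

lemma aux_deriv_bound {C : NNReal} {f : ℝ → ℝ} {a b x d : ℝ} (hab : a < b)
    (hx : x ∈ Set.Icc a b) (hlip : LipschitzOnWith C f (Set.Icc a b))
    (hd : HasDerivWithinAt f d (Set.Icc a b) x) : |d| ≤ C := by
  have T := hasDerivWithinAt_iff_tendsto_slope.mp hd
  have hne : (𝓝[Set.Icc a b \ {x}] x).NeBot := by
    rcases lt_or_eq_of_le hx.2 with h | h
    · exact (left_nhdsWithin_Ioo_neBot h).mono (nhdsWithin_mono _
        (fun y hy => ⟨⟨hx.1.trans hy.1.le, hy.2.le⟩, by simpa using (ne_of_gt hy.1)⟩))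
    · subst h
      exact (right_nhdsWithin_Ioo_neBot hab).mono (nhdsWithin_mono _
        (fun y hy => ⟨⟨hy.1.le, hy.2.le⟩, by simpa using ne_of_lt hy.2⟩))
  refine le_of_tendsto T.abs ?_
  filter_upwards [self_mem_nhdsWithin] with y hy
  have hyx : y ≠ x := hy.2
  have hd : dist (f y) (f x) ≤ C * dist y x := hlip.dist_le_mul y hy.1 x hx
  rw [slope_def_field, abs_div]
  rw [Real.dist_eq, Real.dist_eq] at hd
  have h0 : 0 < |y - x| := abs_pos.mpr (sub_ne_zero.mpr hyx)
  rw [div_le_iff₀ h0]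
  exact hd

lemma aux_ftc {a0 b0 a b : ℝ} {C : NNReal} {f φ : ℝ → ℝ}
    (h0 : a0 < b0)
    (hder : ∀ s ∈ Set.Icc a0 b0, HasDerivWithinAt f (φ s) (Set.Icc a0 b0) s)
    (hlip : LipschitzOnWith C f (Set.Icc a0 b0))
    (hφm : Measurable φ)
    (ha : a ∈ Set.Icc a0 b0) (hb : b ∈ Set.Icc a0 b0) (hab : a ≤ b) :
    ∫ s in a..b, φ s = f b - f a := by
  have hint : IntervalIntegrable φ volume a b := by
    refine aux_intervalIntegrable (M := (C:ℝ)) hφm (fun x hx => ?_)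
    rw [Set.uIoc_of_le hab] at hx
    exact aux_deriv_bound h0 ⟨ha.1.trans hx.1.le, hx.2.trans hb.2⟩ hlip
      (hder x ⟨ha.1.trans hx.1.le, hx.2.trans hb.2⟩)
  refine intervalIntegral.integral_eq_sub_of_hasDeriv_right_of_le hab
    (hlip.continuousOn.mono (Set.Icc_subset_Icc ha.1 hb.2)) (fun x hx => ?_) hint
  have hx0 : x ∈ Set.Ioo a0 b0 := ⟨lt_of_le_of_lt ha.1 hx.1, lt_of_lt_of_le hx.2 hb.2⟩
  exact ((hder x (Set.Ioo_subset_Icc_self hx0)).hasDerivAt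
    (Icc_mem_nhds hx0.1 hx0.2)).hasDerivWithinAt

lemma aux_key {θlow θhigh Lbar : ℝ} {C : NNReal} {h D : ℝ → ℝ → ℝ} {ρ : ℝ → ℝ}
    (hθ : θlow < θhigh) (hL : 0 < Lbar)
    (hder : ∀ l ∈ Set.Icc (0:ℝ) Lbar, ∀ s ∈ Set.Icc θlow θhigh,
      HasDerivWithinAt (fun t => h t l) (D s l) (Set.Icc θlow θhigh) s)
    (hlip : ∀ l ∈ Set.Icc (0:ℝ) Lbar,
      LipschitzOnWith C (fun s => h s l) (Set.Icc θlow θhigh))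
    (hDmeas : Measurable (Function.uncurry D))
    (hhmeas : Measurable (Function.uncurry h))
    (hhbd : ∀ θ ∈ Set.Icc θlow θhigh, ∀ l ∈ Set.Icc (0:ℝ) Lbar, h θ l ∈ Set.Icc (0:ℝ) 1)
    (hρm : Measurable ρ) (hρb : ∀ l ∈ Set.Icc (0:ℝ) Lbar, |ρ l| ≤ 1)
    {a b : ℝ} (ha : a ∈ Set.Icc θlow θhigh) (hb : b ∈ Set.Icc θlow θhigh) (hab : a ≤ b) :
    (∫ l in (0:ℝ)..Lbar, (1 - h b l) * ρ l) - (∫ l in (0:ℝ)..Lbar, (1 - h a l) * ρ l)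
      = - ∫ s in a..b, ∫ l in (0:ℝ)..Lbar, D s l * ρ l := by
  have hDbd : ∀ s ∈ Set.Icc θlow θhigh, ∀ l ∈ Set.Icc (0:ℝ) Lbar, |D s l| ≤ C :=
    fun s hs l hl => aux_deriv_bound hθ hs (hlip l hl) (hder l hl s hs)
  have hIoc : Set.Ioc (0:ℝ) Lbar ⊆ Set.Icc (0:ℝ) Lbar := Set.Ioc_subset_Icc_self
  have hIocs : Set.Ioc a b ⊆ Set.Icc θlow θhigh :=
    fun s hs => ⟨ha.1.trans hs.1.le, hs.2.trans hb.2⟩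
  have hsec : ∀ t : ℝ, Measurable (fun l => h t l) := fun t =>
    hhmeas.comp (measurable_const.prodMk measurable_id)
  -- integrability of the l-sections
  have hI : ∀ t ∈ Set.Icc θlow θhigh,
      IntervalIntegrable (fun l => (1 - h t l) * ρ l) volume 0 Lbar := by
    intro t ht
    refine aux_intervalIntegrable (M := 1) (((measurable_const.sub (hsec t)).mul hρm)) (fun x hx => ?_)
    rw [Set.uIoc_of_le hL.le] at hx
    have h1 := hhbd t ht x (hIoc hx)
    have h2 := hρb x (hIoc hx)
    rw [abs_mul]
    calc |1 - h t x| * |ρ x| ≤ 1 * 1 := by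
          apply mul_le_mul _ h2 (abs_nonneg _) zero_le_one
          rw [abs_le]; constructor <;> [linarith [h1.2]; linarith [h1.1]]
      _ = 1 := by ring
  -- step 1 : combine the two integrals
  rw [← intervalIntegral.integral_sub (hI b hb) (hI a ha)]
  -- step 2 : pointwise FTC
  have hstep : ∀ l ∈ Set.Ioc (0:ℝ) Lbar,
      (1 - h b l) * ρ l - (1 - h a l) * ρ l = -∫ s in a..b, D s l * ρ l := by
    intro l hl
    have hftc : (∫ s in a..b, D s l) = h b l - h a l :=
      aux_ftc hθ (hder l (hIoc hl)) (hlip l (hIoc hl))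
        (hDmeas.comp (measurable_id.prodMk measurable_const)) ha hb hab
    have : (∫ s in a..b, D s l * ρ l) = (∫ s in a..b, D s l) * ρ l :=
      intervalIntegral.integral_mul_const _ _
    rw [this, hftc]; ring
  rw [intervalIntegral.integral_of_le hL.le,
    MeasureTheory.setIntegral_congr_fun measurableSet_Ioc hstep]
  -- step 3 : Fubini
  have hfub : (∫ l in Set.Ioc (0:ℝ) Lbar, ∫ s in a..b, D s l * ρ l)
      = ∫ s in a..b, ∫ l in (0:ℝ)..Lbar, D s l * ρ l := by
    have hprod : Integrable (Function.uncurry (fun l s => D s l * ρ l))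
        ((volume.restrict (Set.Ioc (0:ℝ) Lbar)).prod (volume.restrict (Set.Ioc a b))) := by
      have hm : Measurable (Function.uncurry (fun l s => D s l * ρ l)) := by
        apply Measurable.mul
        · exact hDmeas.comp (measurable_snd.prodMk measurable_fst)
        · exact hρm.comp measurable_fst
      refine (integrable_const ((C : ℝ))).mono' hm.aestronglyMeasurable ?_
      rw [Measure.prod_restrict]
      filter_upwards [ae_restrict_mem (measurableSet_Ioc.prod measurableSet_Ioc)] with x hx
      have h1 := hDbd x.2 (hIocs hx.2) x.1 (hIoc hx.1)
      have h2 := hρb x.1 (hIoc hx.1)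
      simp only [Function.uncurry, Real.norm_eq_abs, abs_mul]
      calc |D x.2 x.1| * |ρ x.1| ≤ (C : ℝ) * 1 :=
            mul_le_mul h1 h2 (abs_nonneg _) C.coe_nonneg
        _ = (C : ℝ) := mul_one _
    have hsw := MeasureTheory.integral_integral_swap hprod
    simp only [intervalIntegral.integral_of_le hab, intervalIntegral.integral_of_le hL.le]
    exact hsw
  rw [MeasureTheory.integral_neg, neg_inj]
  exact hfub

end Aux

/-- The agent's Yaari dual utility: `U_θ(r, p) = -p - ∫₀^{L̄} (1 - g_θ(F_θ(l))) r(l) dl`. -/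
noncomputable def Uag (g F : ℝ → ℝ → ℝ) (Lbar θ : ℝ) (rr : ℝ → ℝ) (pp : ℝ) : ℝ :=
  -pp - ∫ l in (0 : ℝ)..Lbar, (1 - g θ (F θ l)) * rr l

/-- The agent's no-insurance utility: `U_θ⁰ = -∫₀^{L̄} (1 - g_θ(F_θ(l))) dl`. -/
noncomputable def U0 (g F : ℝ → ℝ → ℝ) (Lbar θ : ℝ) : ℝ :=
  -∫ l in (0 : ℝ)..Lbar, (1 - g θ (F θ l))

/-- The insurer's Yaari dual utility:
`V_θ(r, p) = p - ∫₀^{L̄} (1 - g^In(F_θ(l))) (1 - r(l)) dl`. -/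
noncomputable def Vin (gIn : ℝ → ℝ) (F : ℝ → ℝ → ℝ) (Lbar θ : ℝ) (rr : ℝ → ℝ) (pp : ℝ) : ℝ :=
  pp - ∫ l in (0 : ℝ)..Lbar, (1 - gIn (F θ l)) * (1 - rr l)

/-- **Joint characterization of IR ∩ IC for submodular retentions.** With submodular
retentions, the menu is individually rational and incentive compatible iff the premia
satisfy the envelope formula (★), the lowest-type premium does not exceed its IR bound, and
the insurer's aggregate utility is nonnegative. -/
theorem IR_and_IC_characterization_of_submodular
    (θlow θhigh Lbar : ℝ) (hθ : θlow < θhigh) (hL : 0 < Lbar)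
    (g : ℝ → ℝ → ℝ) (gIn : ℝ → ℝ) (F : ℝ → ℝ → ℝ)
    (hg_mono : ∀ θ ∈ Set.Icc θlow θhigh, MonotoneOn (g θ) (Set.Icc (0 : ℝ) 1))
    (hg0 : ∀ θ ∈ Set.Icc θlow θhigh, g θ 0 = 0)
    (hg1 : ∀ θ ∈ Set.Icc θlow θhigh, g θ 1 = 1)
    (hg_range : ∀ θ ∈ Set.Icc θlow θhigh, ∀ t ∈ Set.Icc (0 : ℝ) 1,
      g θ t ∈ Set.Icc (0 : ℝ) 1)
    (hgIn_mono : MonotoneOn gIn (Set.Icc (0 : ℝ) 1))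
    (hgIn0 : gIn 0 = 0) (hgIn1 : gIn 1 = 1)
    (hgIn_range : ∀ t ∈ Set.Icc (0 : ℝ) 1, gIn t ∈ Set.Icc (0 : ℝ) 1)
    (hF_range : ∀ θ ∈ Set.Icc θlow θhigh, ∀ l ∈ Set.Icc (0 : ℝ) Lbar,
      F θ l ∈ Set.Icc (0 : ℝ) 1)
    (hgF_meas : Measurable fun x : ℝ × ℝ => g x.1 (F x.1 x.2))
    (hgInF_meas : Measurable fun x : ℝ × ℝ => gIn (F x.1 x.2))
    (r : ℝ → ℝ → ℝ) (p : ℝ → ℝ)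
    (hr_meas : Measurable (Function.uncurry r)) (hp_meas : Measurable p)
    (hr_range : ∀ θ ∈ Set.Icc θlow θhigh, ∀ l ∈ Set.Icc (0 : ℝ) Lbar,
      r θ l ∈ Set.Icc (0 : ℝ) 1)
    (q : ℝ → ℝ) (hq_nonneg : ∀ θ, 0 ≤ q θ) (hq_meas : Measurable q)
    (hq_int : (∫ θ in θlow..θhigh, q θ) = 1)
    (D : ℝ → ℝ → ℝ)
    (hD : ∀ l ∈ Set.Icc (0 : ℝ) Lbar, ∀ s ∈ Set.Icc θlow θhigh,
      HasDerivWithinAt (fun t => g t (F t l)) (D s l) (Set.Icc θlow θhigh) s)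
    (hLip : ∃ C : NNReal, ∀ l ∈ Set.Icc (0 : ℝ) Lbar,
      LipschitzOnWith C (fun s => g s (F s l)) (Set.Icc θlow θhigh))
    (hD_meas : Measurable (Function.uncurry D))
    (hD_nonpos : ∀ s ∈ Set.Icc θlow θhigh, ∀ l ∈ Set.Icc (0 : ℝ) Lbar, D s l ≤ 0)
    -- submodularity: `r_θ(l)` is nonincreasing in `θ` for every `l`
    (hsub : ∀ l ∈ Set.Icc (0 : ℝ) Lbar, ∀ θ₁ ∈ Set.Icc θlow θhigh,
      ∀ θ₂ ∈ Set.Icc θlow θhigh, θ₁ ≤ θ₂ → r θ₂ l ≤ r θ₁ l) :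
    ((∀ θ ∈ Set.Icc θlow θhigh, U0 g F Lbar θ ≤ Uag g F Lbar θ (r θ) (p θ)) ∧
        (0 ≤ ∫ θ in θlow..θhigh, Vin gIn F Lbar θ (r θ) (p θ) * q θ) ∧
        (∀ θ ∈ Set.Icc θlow θhigh, ∀ θ' ∈ Set.Icc θlow θhigh,
          Uag g F Lbar θ (r θ') (p θ') ≤ Uag g F Lbar θ (r θ) (p θ))) ↔
      ((∀ θ ∈ Set.Icc θlow θhigh,
          p θ = p θlow + (∫ l in (0 : ℝ)..Lbar, (1 - g θlow (F θlow l)) * r θlow l)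
            - (∫ s in θlow..θ, ∫ l in (0 : ℝ)..Lbar, D s l * r s l)
            - ∫ l in (0 : ℝ)..Lbar, (1 - g θ (F θ l)) * r θ l) ∧
        (p θlow ≤ ∫ l in (0 : ℝ)..Lbar, (1 - g θlow (F θlow l)) * (1 - r θlow l)) ∧
        (0 ≤ ∫ θ in θlow..θhigh, Vin gIn F Lbar θ (r θ) (p θ) * q θ)) := by
  classical
  obtain ⟨C, hlipC⟩ := hLip
  have hIocL : Set.Ioc (0:ℝ) Lbar ⊆ Set.Icc (0:ℝ) Lbar := Set.Ioc_subset_Icc_self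
  have hhbd : ∀ θ ∈ Set.Icc θlow θhigh, ∀ l ∈ Set.Icc (0:ℝ) Lbar,
      g θ (F θ l) ∈ Set.Icc (0:ℝ) 1 := fun θ' hθ' l hl => hg_range θ' hθ' _ (hF_range θ' hθ' l hl)
  have hDbd : ∀ s ∈ Set.Icc θlow θhigh, ∀ l ∈ Set.Icc (0:ℝ) Lbar, |D s l| ≤ (C:ℝ) :=
    fun s hs l hl => aux_deriv_bound hθ hs (hlipC l hl) (hD l hl s hs)
  have hrm : ∀ t, Measurable (fun l => r t l) := fun t =>
    hr_meas.comp (measurable_const.prodMk measurable_id)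
  have hDm : ∀ s, Measurable (fun l => D s l) := fun s =>
    hD_meas.comp (measurable_const.prodMk measurable_id)
  have hgFm : ∀ t, Measurable (fun l => g t (F t l)) := fun t =>
    hgF_meas.comp (measurable_const.prodMk measurable_id)
  have hrb : ∀ t ∈ Set.Icc θlow θhigh, ∀ l ∈ Set.Icc (0:ℝ) Lbar, |r t l| ≤ 1 := by
    intro t ht l hl
    have := hr_range t ht l hl
    rw [abs_le]; exact ⟨by linarith [this.1], this.2⟩
  set W : ℝ → ℝ → ℝ := fun t u => ∫ l in (0:ℝ)..Lbar, (1 - g t (F t l)) * r u l with hW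
  set I : ℝ → ℝ → ℝ := fun s u => ∫ l in (0:ℝ)..Lbar, D s l * r u l with hI
  set T : ℝ → ℝ := fun t => ∫ l in (0:ℝ)..Lbar, (1 - g t (F t l)) with hT
  set A : ℝ → ℝ := fun t => ∫ l in (0:ℝ)..Lbar, r t l with hA
  -- key identity from FTC + Fubini
  have hkey : ∀ u ∈ Set.Icc θlow θhigh, ∀ a ∈ Set.Icc θlow θhigh, ∀ b ∈ Set.Icc θlow θhigh,
      a ≤ b → W b u - W a u = -∫ s in a..b, I s u := by
    intro u hu a ha b hb hab
    exact aux_key hθ hL hD hlipC hD_meas hgF_meas hhbd (hrm u) (fun l hl => hrb u hu l hl)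
      ha hb hab
  have hkeyT : ∀ a ∈ Set.Icc θlow θhigh, ∀ b ∈ Set.Icc θlow θhigh, a ≤ b →
      T b - T a = -∫ s in a..b, ∫ l in (0:ℝ)..Lbar, D s l := by
    intro a ha b hb hab
    have := aux_key (ρ := fun _ => 1) hθ hL hD hlipC hD_meas hgF_meas hhbd measurable_const
      (fun l _ => by norm_num) ha hb hab
    simpa only [mul_one] using this
  -- integrability of l-sections
  have hDrint : ∀ s ∈ Set.Icc θlow θhigh, ∀ u ∈ Set.Icc θlow θhigh,
      IntervalIntegrable (fun l => D s l * r u l) volume 0 Lbar := by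
    intro s hs u hu
    refine aux_intervalIntegrable (M := (C:ℝ)) ((hDm s).mul (hrm u)) (fun x hx => ?_)
    rw [Set.uIoc_of_le hL.le] at hx
    rw [abs_mul]
    calc |D s x| * |r u x| ≤ (C:ℝ) * 1 :=
          mul_le_mul (hDbd s hs x (hIocL hx)) (hrb u hu x (hIocL hx)) (abs_nonneg _) C.coe_nonneg
      _ = (C:ℝ) := mul_one _
  have hDint : ∀ s ∈ Set.Icc θlow θhigh,
      IntervalIntegrable (fun l => D s l) volume 0 Lbar := by
    intro s hs
    refine aux_intervalIntegrable (M := (C:ℝ)) (hDm s) (fun x hx => ?_)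
    rw [Set.uIoc_of_le hL.le] at hx
    exact hDbd s hs x (hIocL hx)
  have hrint : ∀ u ∈ Set.Icc θlow θhigh, IntervalIntegrable (fun l => r u l) volume 0 Lbar := by
    intro u hu
    refine aux_intervalIntegrable (M := 1) (hrm u) (fun x hx => ?_)
    rw [Set.uIoc_of_le hL.le] at hx
    exact hrb u hu x (hIocL hx)
  have hgFint : ∀ u ∈ Set.Icc θlow θhigh,
      IntervalIntegrable (fun l => (1 - g u (F u l)) * r u l) volume 0 Lbar := by
    intro u hu
    refine aux_intervalIntegrable (M := 1) ((measurable_const.sub (hgFm u)).mul (hrm u))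
      (fun x hx => ?_)
    rw [Set.uIoc_of_le hL.le] at hx
    have h1 := hhbd u hu x (hIocL hx)
    have h2 := hrb u hu x (hIocL hx)
    rw [abs_mul]
    calc |1 - g u (F u x)| * |r u x| ≤ 1 * 1 := by
          refine mul_le_mul ?_ h2 (abs_nonneg _) zero_le_one
          rw [abs_le]; exact ⟨by linarith [h1.2], by linarith [h1.1]⟩
      _ = 1 := by ring
  have hgFint1 : ∀ u ∈ Set.Icc θlow θhigh,
      IntervalIntegrable (fun l => (1 - g u (F u l))) volume 0 Lbar := by
    intro u hu
    refine aux_intervalIntegrable (M := 1) (measurable_const.sub (hgFm u)) (fun x hx => ?_)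
    rw [Set.uIoc_of_le hL.le] at hx
    have h1 := hhbd u hu x (hIocL hx)
    rw [abs_le]; exact ⟨by linarith [h1.2], by linarith [h1.1]⟩
  -- monotonicity of I in second variable
  have hImono : ∀ s ∈ Set.Icc θlow θhigh, ∀ u₁ ∈ Set.Icc θlow θhigh,
      ∀ u₂ ∈ Set.Icc θlow θhigh, u₁ ≤ u₂ → I s u₁ ≤ I s u₂ := by
    intro s hs u₁ hu₁ u₂ hu₂ h12
    refine intervalIntegral.integral_mono_on hL.le (hDrint s hs u₁ hu₁) (hDrint s hs u₂ hu₂)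
      (fun l hl => ?_)
    exact mul_le_mul_of_nonpos_left (hsub l hl u₁ hu₁ u₂ hu₂ h12) (hD_nonpos s hs l hl)
  -- I dominates the full-retention integral
  have hII1 : ∀ s ∈ Set.Icc θlow θhigh, (∫ l in (0:ℝ)..Lbar, D s l) ≤ I s s := by
    intro s hs
    refine intervalIntegral.integral_mono_on hL.le (hDint s hs) (hDrint s hs s hs)
      (fun l hl => ?_)
    have h1 := hr_range s hs l hl
    nlinarith [hD_nonpos s hs l hl, h1.1, h1.2]
  -- measurability and integrability of s ↦ I s u and s ↦ I s s
  have hIm_meas : ∀ u : ℝ, Measurable (fun s => I s u) := by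
    intro u
    have hm : Measurable (Function.uncurry (fun s l => D s l * r u l)) :=
      hD_meas.mul (hr_meas.comp (measurable_const.prodMk measurable_snd))
    have := hm.stronglyMeasurable.integral_prod_right
        (ν := volume.restrict (Set.Ioc (0:ℝ) Lbar))
    have heq : (fun s => I s u)
        = fun s => ∫ l, (fun s l => D s l * r u l) s l ∂(volume.restrict (Set.Ioc (0:ℝ) Lbar)) := by
      funext s
      rw [hI]
      simp only
      rw [intervalIntegral.integral_of_le hL.le]
    rw [heq]
    exact this.measurable
  have hIself_meas : Measurable (fun s => I s s) := by
    have hm : Measurable (Function.uncurry (fun s l => D s l * r s l)) :=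
      hD_meas.mul hr_meas
    have := hm.stronglyMeasurable.integral_prod_right
        (ν := volume.restrict (Set.Ioc (0:ℝ) Lbar))
    have heq : (fun s => I s s)
        = fun s => ∫ l, (fun s l => D s l * r s l) s l ∂(volume.restrict (Set.Ioc (0:ℝ) Lbar)) := by
      funext s
      rw [hI]
      simp only
      rw [intervalIntegral.integral_of_le hL.le]
    rw [heq]
    exact this.measurable
  have hIbd : ∀ s ∈ Set.Icc θlow θhigh, ∀ u ∈ Set.Icc θlow θhigh,
      |I s u| ≤ (C:ℝ) * Lbar := by
    intro s hs u hu
    have : ‖∫ l in (0:ℝ)..Lbar, D s l * r u l‖ ≤ (C:ℝ) * |Lbar - 0| := by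
      refine intervalIntegral.norm_integral_le_of_norm_le_const (fun x hx => ?_)
      rw [Set.uIoc_of_le hL.le] at hx
      rw [Real.norm_eq_abs, abs_mul]
      calc |D s x| * |r u x| ≤ (C:ℝ) * 1 :=
            mul_le_mul (hDbd s hs x (hIocL hx)) (hrb u hu x (hIocL hx)) (abs_nonneg _)
              C.coe_nonneg
        _ = (C:ℝ) := mul_one _
    rw [Real.norm_eq_abs] at this
    calc |I s u| ≤ (C:ℝ) * |Lbar - 0| := this
      _ = (C:ℝ) * Lbar := by rw [sub_zero, abs_of_pos hL]
  have hIuint : ∀ u ∈ Set.Icc θlow θhigh, ∀ a ∈ Set.Icc θlow θhigh, ∀ b ∈ Set.Icc θlow θhigh,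
      IntervalIntegrable (fun s => I s u) volume a b := by
    intro u hu a ha b hb
    refine aux_intervalIntegrable (M := (C:ℝ) * Lbar) (hIm_meas u) (fun x hx => ?_)
    have hxm : x ∈ Set.Icc θlow θhigh := by
      rcases Set.uIoc_subset_uIcc hx with h
      have := Set.uIcc_subset_Icc ha hb h
      exact this
    exact hIbd x hxm u hu
  have hIsint : ∀ a ∈ Set.Icc θlow θhigh, ∀ b ∈ Set.Icc θlow θhigh,
      IntervalIntegrable (fun s => I s s) volume a b := by
    intro a ha b hb
    refine aux_intervalIntegrable (M := (C:ℝ) * Lbar) hIself_meas (fun x hx => ?_)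
    have hxm : x ∈ Set.Icc θlow θhigh := Set.uIcc_subset_Icc ha hb (Set.uIoc_subset_uIcc hx)
    exact hIbd x hxm x hxm
  -- facts about A
  have hAbd : ∀ u ∈ Set.Icc θlow θhigh, 0 ≤ A u ∧ A u ≤ Lbar := by
    intro u hu
    constructor
    · exact intervalIntegral.integral_nonneg hL.le (fun l hl => (hr_range u hu l hl).1)
    · have : A u ≤ ∫ _ in (0:ℝ)..Lbar, (1:ℝ) :=
        intervalIntegral.integral_mono_on hL.le (hrint u hu) intervalIntegrable_const
          (fun l hl => (hr_range u hu l hl).2)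
      simpa using this
  -- the envelope theorem (forward direction)
  have hlowmem : θlow ∈ Set.Icc θlow θhigh := ⟨le_refl _, hθ.le⟩
  have henv : (∀ ta ∈ Set.Icc θlow θhigh, ∀ tb ∈ Set.Icc θlow θhigh,
      p ta + W ta ta ≤ p tb + W ta tb) →
      ∀ u ∈ Set.Icc θlow θhigh,
        p u + W u u = p θlow + W θlow θlow - ∫ s in θlow..u, I s s := by
    intro hIC' u hu
    set X := (p u + W u u) - (p θlow + W θlow θlow) + (∫ s in θlow..u, I s s) with hXdef
    have hbound : ∀ n : ℕ, 0 < n → |X| ≤ ((C:ℝ) * Lbar) * ((u - θlow) / n) := by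
      intro n hn
      have hn' : (0:ℝ) < n := Nat.cast_pos.mpr hn
      set δ := (u - θlow) / n with hδdef
      have hδ0 : 0 ≤ δ := div_nonneg (by linarith [hu.1]) hn'.le
      set t : ℕ → ℝ := fun i => θlow + i * δ with htdef
      have ht0 : t 0 = θlow := by simp [htdef]
      have htn : t n = u := by
        rw [htdef]; simp only; rw [hδdef]; field_simp; ring
      have htstep : ∀ i : ℕ, t (i+1) - t i = δ := by
        intro i; rw [htdef]; push_cast; ring
      have htmono : ∀ i : ℕ, t i ≤ t (i+1) := fun i => by
        have := htstep i; linarith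
      have htmem : ∀ i : ℕ, i ≤ n → t i ∈ Set.Icc θlow θhigh := by
        intro i hi
        constructor
        · rw [htdef]; simp only
          nlinarith [Nat.cast_nonneg (α := ℝ) i]
        · have h1 : t i ≤ t n := by
            rw [htdef]; simp only
            have hin : (i:ℝ) ≤ n := Nat.cast_le.mpr hi
            nlinarith
          rw [htn] at h1; exact h1.trans hu.2
      have hmem1 : ∀ i : ℕ, i < n → t i ∈ Set.Icc θlow θhigh := fun i hi => htmem i hi.le
      have hmem2 : ∀ i : ℕ, i < n → t (i+1) ∈ Set.Icc θlow θhigh := fun i hi => htmem (i+1) hi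
      have hchunkU : ∀ i : ℕ, i < n →
          (p (t (i+1)) + W (t (i+1)) (t (i+1))) - (p (t i) + W (t i) (t i))
            ≤ -∫ s in (t i)..(t (i+1)), I s (t i) := by
        intro i hi
        have h1 := hIC' (t (i+1)) (hmem2 i hi) (t i) (hmem1 i hi)
        have h2 := hkey (t i) (hmem1 i hi) (t i) (hmem1 i hi) (t (i+1)) (hmem2 i hi) (htmono i)
        linarith
      have hchunkL : ∀ i : ℕ, i < n →
          -∫ s in (t i)..(t (i+1)), I s (t (i+1))
            ≤ (p (t (i+1)) + W (t (i+1)) (t (i+1))) - (p (t i) + W (t i) (t i)) := by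
        intro i hi
        have h1 := hIC' (t i) (hmem1 i hi) (t (i+1)) (hmem2 i hi)
        have h2 := hkey (t (i+1)) (hmem2 i hi) (t i) (hmem1 i hi) (t (i+1)) (hmem2 i hi)
          (htmono i)
        linarith
      have hmidU : ∀ i : ℕ, i < n →
          -∫ s in (t i)..(t (i+1)), I s s ≤ -∫ s in (t i)..(t (i+1)), I s (t i) := by
        intro i hi
        have hmono : (∫ s in (t i)..(t (i+1)), I s (t i))
            ≤ ∫ s in (t i)..(t (i+1)), I s s := by
          refine intervalIntegral.integral_mono_on (htmono i)
            (hIuint (t i) (hmem1 i hi) (t i) (hmem1 i hi) (t (i+1)) (hmem2 i hi))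
            (hIsint (t i) (hmem1 i hi) (t (i+1)) (hmem2 i hi)) (fun s hs => ?_)
          have hsm : s ∈ Set.Icc θlow θhigh :=
            ⟨(hmem1 i hi).1.trans hs.1, hs.2.trans (hmem2 i hi).2⟩
          exact hImono s hsm (t i) (hmem1 i hi) s hsm hs.1
        linarith
      have hmidL : ∀ i : ℕ, i < n →
          -∫ s in (t i)..(t (i+1)), I s (t (i+1)) ≤ -∫ s in (t i)..(t (i+1)), I s s := by
        intro i hi
        have hmono : (∫ s in (t i)..(t (i+1)), I s s)
            ≤ ∫ s in (t i)..(t (i+1)), I s (t (i+1)) := by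
          refine intervalIntegral.integral_mono_on (htmono i)
            (hIsint (t i) (hmem1 i hi) (t (i+1)) (hmem2 i hi))
            (hIuint (t (i+1)) (hmem2 i hi) (t i) (hmem1 i hi) (t (i+1)) (hmem2 i hi))
            (fun s hs => ?_)
          have hsm : s ∈ Set.Icc θlow θhigh :=
            ⟨(hmem1 i hi).1.trans hs.1, hs.2.trans (hmem2 i hi).2⟩
          exact hImono s hsm s hsm (t (i+1)) (hmem2 i hi) hs.2
        linarith
      have hgap : ∀ i : ℕ, i < n →
          (-∫ s in (t i)..(t (i+1)), I s (t i)) - (-∫ s in (t i)..(t (i+1)), I s (t (i+1)))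
            ≤ δ * ((C:ℝ) * (A (t i) - A (t (i+1)))) := by
        intro i hi
        have heq1 : (-∫ s in (t i)..(t (i+1)), I s (t i))
              - (-∫ s in (t i)..(t (i+1)), I s (t (i+1)))
            = ∫ s in (t i)..(t (i+1)), (I s (t (i+1)) - I s (t i)) := by
          rw [intervalIntegral.integral_sub
            (hIuint (t (i+1)) (hmem2 i hi) _ (hmem1 i hi) _ (hmem2 i hi))
            (hIuint (t i) (hmem1 i hi) _ (hmem1 i hi) _ (hmem2 i hi))]
          ring
        rw [heq1]
        have hpt : ∀ s ∈ Set.Icc (t i) (t (i+1)),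
            I s (t (i+1)) - I s (t i) ≤ (C:ℝ) * (A (t i) - A (t (i+1))) := by
          intro s hs
          have hsm : s ∈ Set.Icc θlow θhigh :=
            ⟨(hmem1 i hi).1.trans hs.1, hs.2.trans (hmem2 i hi).2⟩
          have heq2 : I s (t (i+1)) - I s (t i)
              = ∫ l in (0:ℝ)..Lbar, (D s l * r (t (i+1)) l - D s l * r (t i) l) :=
            (intervalIntegral.integral_sub (hDrint s hsm _ (hmem2 i hi))
              (hDrint s hsm _ (hmem1 i hi))).symm
          have heq3 : (C:ℝ) * (A (t i) - A (t (i+1)))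
              = ∫ l in (0:ℝ)..Lbar, (C:ℝ) * (r (t i) l - r (t (i+1)) l) := by
            rw [intervalIntegral.integral_const_mul,
              intervalIntegral.integral_sub (hrint _ (hmem1 i hi)) (hrint _ (hmem2 i hi))]
          rw [heq2, heq3]
          refine intervalIntegral.integral_mono_on hL.le
            ((hDrint s hsm _ (hmem2 i hi)).sub (hDrint s hsm _ (hmem1 i hi)))
            (((hrint _ (hmem1 i hi)).sub (hrint _ (hmem2 i hi))).const_mul _) (fun l hl => ?_)
          have h1 := hDbd s hsm l hl
          have h2 := hsub l hl (t i) (hmem1 i hi) (t (i+1)) (hmem2 i hi) (htmono i)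
          have h3 : -D s l ≤ (C:ℝ) := by
            have := (abs_le.mp h1).1; linarith
          nlinarith [mul_nonneg (by linarith : (0:ℝ) ≤ (C:ℝ) + D s l)
            (by linarith : (0:ℝ) ≤ r (t i) l - r (t (i+1)) l)]
        have hmono2 : (∫ s in (t i)..(t (i+1)), (I s (t (i+1)) - I s (t i)))
            ≤ ∫ _ in (t i)..(t (i+1)), (C:ℝ) * (A (t i) - A (t (i+1))) := by
          refine intervalIntegral.integral_mono_on (htmono i)
            ((hIuint (t (i+1)) (hmem2 i hi) _ (hmem1 i hi) _ (hmem2 i hi)).sub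
              (hIuint (t i) (hmem1 i hi) _ (hmem1 i hi) _ (hmem2 i hi)))
            intervalIntegrable_const hpt
        rw [intervalIntegral.integral_const, htstep i, smul_eq_mul] at hmono2
        exact hmono2
      -- summation
      have hS1 : ∑ i ∈ Finset.range n,
          ((p (t (i+1)) + W (t (i+1)) (t (i+1))) - (p (t i) + W (t i) (t i)))
          = (p u + W u u) - (p θlow + W θlow θlow) := by
        rw [Finset.sum_range_sub (fun i => p (t i) + W (t i) (t i)), ht0, htn]
      have hS2 : ∑ i ∈ Finset.range n, (∫ s in (t i)..(t (i+1)), I s s)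
          = ∫ s in θlow..u, I s s := by
        have hadj := intervalIntegral.sum_integral_adjacent_intervals (a := t) (n := n)
          (f := fun s => I s s) (fun k hk => hIsint _ (hmem1 k hk) _ (hmem2 k hk))
        rw [ht0, htn] at hadj; exact hadj
      have hub1 : (p u + W u u) - (p θlow + W θlow θlow)
          ≤ ∑ i ∈ Finset.range n, (-∫ s in (t i)..(t (i+1)), I s (t i)) := by
        rw [← hS1]
        exact Finset.sum_le_sum (fun i hi => hchunkU i (Finset.mem_range.mp hi))
      have hlb1 : (∑ i ∈ Finset.range n, (-∫ s in (t i)..(t (i+1)), I s (t (i+1))))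
          ≤ (p u + W u u) - (p θlow + W θlow θlow) := by
        rw [← hS1]
        exact Finset.sum_le_sum (fun i hi => hchunkL i (Finset.mem_range.mp hi))
      have hS2' : ∑ i ∈ Finset.range n, (-∫ s in (t i)..(t (i+1)), I s s)
          = -∫ s in θlow..u, I s s := by
        rw [← hS2, ← Finset.sum_neg_distrib]
      have hub2 : -(∫ s in θlow..u, I s s)
          ≤ ∑ i ∈ Finset.range n, (-∫ s in (t i)..(t (i+1)), I s (t i)) := by
        rw [← hS2']
        exact Finset.sum_le_sum (fun i hi => hmidU i (Finset.mem_range.mp hi))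
      have hlb2 : (∑ i ∈ Finset.range n, (-∫ s in (t i)..(t (i+1)), I s (t (i+1))))
          ≤ -(∫ s in θlow..u, I s s) := by
        rw [← hS2']
        exact Finset.sum_le_sum (fun i hi => hmidL i (Finset.mem_range.mp hi))
      have hgapsum : (∑ i ∈ Finset.range n, (-∫ s in (t i)..(t (i+1)), I s (t i)))
            - (∑ i ∈ Finset.range n, (-∫ s in (t i)..(t (i+1)), I s (t (i+1))))
          ≤ δ * ((C:ℝ) * (A θlow - A u)) := by
        rw [← Finset.sum_sub_distrib]
        calc (∑ i ∈ Finset.range n, ((-∫ s in (t i)..(t (i+1)), I s (t i))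
                - (-∫ s in (t i)..(t (i+1)), I s (t (i+1)))))
            ≤ ∑ i ∈ Finset.range n, δ * ((C:ℝ) * (A (t i) - A (t (i+1)))) :=
              Finset.sum_le_sum (fun i hi => hgap i (Finset.mem_range.mp hi))
          _ = δ * ((C:ℝ) * ∑ i ∈ Finset.range n, (A (t i) - A (t (i+1)))) := by
              rw [← Finset.mul_sum, ← Finset.mul_sum]
          _ = δ * ((C:ℝ) * (A (t 0) - A (t n))) := by
              rw [Finset.sum_range_sub' (fun i => A (t i))]
          _ = δ * ((C:ℝ) * (A θlow - A u)) := by rw [ht0, htn]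
      have hAdiff : A θlow - A u ≤ Lbar := by
        have h1 := hAbd θlow hlowmem
        have h2 := hAbd u hu
        linarith [h1.2, h2.1]
      have hfin : |X| ≤ δ * ((C:ℝ) * Lbar) := by
        have hgs : (∑ i ∈ Finset.range n, (-∫ s in (t i)..(t (i+1)), I s (t i)))
              - (∑ i ∈ Finset.range n, (-∫ s in (t i)..(t (i+1)), I s (t (i+1))))
            ≤ δ * ((C:ℝ) * Lbar) := by
          refine hgapsum.trans ?_
          have hC0 : (0:ℝ) ≤ (C:ℝ) := C.coe_nonneg
          exact mul_le_mul_of_nonneg_left (mul_le_mul_of_nonneg_left hAdiff hC0) hδ0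
        rw [hXdef, abs_le]
        constructor <;> linarith
      calc |X| ≤ δ * ((C:ℝ) * Lbar) := hfin
        _ = ((C:ℝ) * Lbar) * ((u - θlow) / n) := by rw [hδdef]; ring
    have htend : Filter.Tendsto
        (fun n : ℕ => ((C:ℝ) * Lbar * (u - θlow)) / n) Filter.atTop (nhds 0) :=
      tendsto_const_div_atTop_nhds_zero_nat _
    have hle : |X| ≤ 0 := by
      refine ge_of_tendsto htend ?_
      filter_upwards [Filter.eventually_ge_atTop 1] with n hn
      calc |X| ≤ ((C:ℝ) * Lbar) * ((u - θlow) / n) := hbound n (by omega)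
        _ = ((C:ℝ) * Lbar * (u - θlow)) / n := by ring
    have hX0 : X = 0 := abs_eq_zero.mp (le_antisymm hle (abs_nonneg _))
    rw [hXdef] at hX0
    linarith
  -- integrability of s ↦ ∫ D s l
  have hI1_meas : Measurable (fun s => ∫ l in (0:ℝ)..Lbar, D s l) := by
    have hm : Measurable (Function.uncurry D) := hD_meas
    have := hm.stronglyMeasurable.integral_prod_right
        (ν := volume.restrict (Set.Ioc (0:ℝ) Lbar))
    have heq : (fun s => ∫ l in (0:ℝ)..Lbar, D s l)
        = fun s => ∫ l, D s l ∂(volume.restrict (Set.Ioc (0:ℝ) Lbar)) := by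
      funext s
      rw [intervalIntegral.integral_of_le hL.le]
    rw [heq]
    exact this.measurable
  have hI1bd : ∀ s ∈ Set.Icc θlow θhigh, |∫ l in (0:ℝ)..Lbar, D s l| ≤ (C:ℝ) * Lbar := by
    intro s hs
    have h1 : ‖∫ l in (0:ℝ)..Lbar, D s l‖ ≤ (C:ℝ) * |Lbar - 0| := by
      refine intervalIntegral.norm_integral_le_of_norm_le_const (fun x hx => ?_)
      rw [Set.uIoc_of_le hL.le] at hx
      exact hDbd s hs x (hIocL hx)
    rw [Real.norm_eq_abs, sub_zero, abs_of_pos hL] at h1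
    exact h1
  have hI1int : ∀ a ∈ Set.Icc θlow θhigh, ∀ b ∈ Set.Icc θlow θhigh,
      IntervalIntegrable (fun s => ∫ l in (0:ℝ)..Lbar, D s l) volume a b := by
    intro a ha b hb
    refine aux_intervalIntegrable (M := (C:ℝ) * Lbar) hI1_meas (fun x hx => ?_)
    exact hI1bd x (Set.uIcc_subset_Icc ha hb (Set.uIoc_subset_uIcc hx))
  -- bridging equalities
  have hTW : ∀ u ∈ Set.Icc θlow θhigh,
      (∫ l in (0:ℝ)..Lbar, (1 - g u (F u l)) * (1 - r u l)) = T u - W u u := by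
    intro u hu
    have h1 : (∫ l in (0:ℝ)..Lbar, (1 - g u (F u l)) * (1 - r u l))
        = ∫ l in (0:ℝ)..Lbar, ((1 - g u (F u l)) - (1 - g u (F u l)) * r u l) :=
      intervalIntegral.integral_congr (fun l _ => by ring)
    rw [h1, intervalIntegral.integral_sub (hgFint1 u hu) (hgFint u hu)]
  have hUag_eq : ∀ a b : ℝ, Uag g F Lbar a (r b) (p b) = -(p b) - W a b := fun a b => rfl
  have hU0_eq : ∀ a : ℝ, U0 g F Lbar a = -(T a) := fun a => rfl
  have hWd : ∀ u : ℝ, W u u = ∫ l in (0:ℝ)..Lbar, (1 - g u (F u l)) * r u l := fun _ => rfl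
  have hWlow : W θlow θlow = ∫ l in (0:ℝ)..Lbar, (1 - g θlow (F θlow l)) * r θlow l := rfl
  have hJd : ∀ u : ℝ, (∫ s in θlow..u, I s s)
      = ∫ s in θlow..u, ∫ l in (0:ℝ)..Lbar, D s l * r s l := fun _ => rfl
  constructor
  · rintro ⟨hIR, hIns, hIC⟩
    have hIC' : ∀ ta ∈ Set.Icc θlow θhigh, ∀ tb ∈ Set.Icc θlow θhigh,
        p ta + W ta ta ≤ p tb + W ta tb := by
      intro ta hta tb htb
      have h2 := hIC ta hta tb htb
      rw [hUag_eq, hUag_eq] at h2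
      linarith
    refine ⟨?_, ?_, hIns⟩
    · intro u hu
      have hE := henv hIC' u hu
      linarith [hE, hWd u, hWlow, hJd u]
    · have h1 := hIR θlow hlowmem
      rw [hUag_eq, hU0_eq] at h1
      rw [hTW θlow hlowmem]
      linarith
  · rintro ⟨hEnv, hIRlow, hIns⟩
    have hEnv' : ∀ u ∈ Set.Icc θlow θhigh,
        p u + W u u = p θlow + W θlow θlow - ∫ s in θlow..u, I s s := by
      intro u hu
      have h1 := hEnv u hu
      linarith [h1, hWd u, hWlow, hJd u]
    have hPlow : p θlow + W θlow θlow ≤ T θlow := by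
      have h1 := hIRlow
      rw [hTW θlow hlowmem] at h1
      linarith
    refine ⟨?_, hIns, ?_⟩
    · -- individual rationality of each type
      intro u hu
      rw [hU0_eq, hUag_eq]
      have hE := hEnv' u hu
      have hTT := hkeyT θlow hlowmem u hu hu.1
      have hcomp : (∫ s in θlow..u, ∫ l in (0:ℝ)..Lbar, D s l) ≤ ∫ s in θlow..u, I s s := by
        refine intervalIntegral.integral_mono_on hu.1 (hI1int θlow hlowmem u hu)
          (hIsint θlow hlowmem u hu) (fun s hs => ?_)
        exact hII1 s ⟨hs.1, hs.2.trans hu.2⟩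
      linarith
    · -- incentive compatibility
      intro u hu v hv
      rw [hUag_eq, hUag_eq]
      have hEu := hEnv' u hu
      have hEv := hEnv' v hv
      rcases le_total v u with hvu | huv
      · have hsplit : (∫ s in θlow..v, I s s) + (∫ s in v..u, I s s)
            = ∫ s in θlow..u, I s s :=
          intervalIntegral.integral_add_adjacent_intervals (hIsint θlow hlowmem v hv)
            (hIsint v hv u hu)
        have hkv := hkey v hv v hv u hu hvu
        have hmono : (∫ s in v..u, I s v) ≤ ∫ s in v..u, I s s := by
          refine intervalIntegral.integral_mono_on hvu (hIuint v hv v hv u hu)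
            (hIsint v hv u hu) (fun s hs => ?_)
          have hsm : s ∈ Set.Icc θlow θhigh := ⟨hv.1.trans hs.1, hs.2.trans hu.2⟩
          exact hImono s hsm v hv s hsm hs.1
        linarith
      · have hsplit : (∫ s in θlow..u, I s s) + (∫ s in u..v, I s s)
            = ∫ s in θlow..v, I s s :=
          intervalIntegral.integral_add_adjacent_intervals (hIsint θlow hlowmem u hu)
            (hIsint u hu v hv)
        have hkv := hkey v hv u hu v hv huv
        have hmono : (∫ s in u..v, I s s) ≤ ∫ s in u..v, I s v := by
          refine intervalIntegral.integral_mono_on huv (hIsint u hu v hv)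
            (hIuint v hv u hu v hv) (fun s hs => ?_)
          have hsm : s ∈ Set.Icc θlow θhigh := ⟨hu.1.trans hs.1, hs.2.trans hv.2⟩
          exact hImono s hsm s hsm v hv hs.2
        linarith
end

section
/- (Proposition: insurer's aggregate utility under incentive compatibility, equation (eq:barV).) Suppose the menu's premia satisfy the premium formula (★): p_θ = p_{θ̲} + ∫₀^{L̄} (1 − g_{θ̲}(F_{θ̲}(l))) r_{θ̲}(l) dl − ∫_{θ̲}^{θ} ∫₀^{L̄} D(s,l) r_s(l) dl ds − ∫₀^{L̄} (1 − g_θ(F_θ(l))) r_θ(l) dl for every θ ∈ Θ. Then the insurer's total utility satisfies ∫_Θ V_θ(r_θ, p_θ) q(θ) dθ = p_{θ̲} + ∫₀^{L̄} (1 − g_{θ̲}(F_{θ̲}(l))) r_{θ̲}(l) dl − ∫_Θ ∫₀^{L̄} (1 − g^In(F_θ(l))) q(θ) dl dθ − ∫_Θ ∫₀^{L̄} [ (g^In(F_θ(l)) − g_θ(F_θ(l))) q(θ) + D(θ,l) Q̄(θ) ] r_θ(l) dl dθ. -/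
open MeasureTheory

open Filter Topology in
lemma abs_deriv_le_of_lipschitzOnWith {a b : ℝ} (hab : a < b) {f : ℝ → ℝ} {C : NNReal}
    (hlip : LipschitzOnWith C f (Set.Icc a b)) {s d : ℝ} (hs : s ∈ Set.Icc a b)
    (hd : HasDerivWithinAt f d (Set.Icc a b) s) : |d| ≤ C := by
  rw [hasDerivWithinAt_iff_tendsto_slope] at hd
  have hne : (𝓝[Set.Icc a b \ {s}] s).NeBot := by
    rw [← mem_closure_iff_nhdsWithin_neBot]
    rcases lt_or_eq_of_le hs.2 with h | h
    · have hsub : Set.Ioc s b ⊆ Set.Icc a b \ {s} := fun y hy =>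
        ⟨⟨le_trans hs.1 hy.1.le, hy.2⟩, by simp [ne_of_gt hy.1]⟩
      have : s ∈ closure (Set.Ioc s b) := by
        rw [closure_Ioc (ne_of_lt h)]; exact ⟨le_refl s, h.le⟩
      exact closure_mono hsub this
    · have h' : a < s := by linarith
      have hsub : Set.Ico a s ⊆ Set.Icc a b \ {s} := fun y hy =>
        ⟨⟨hy.1, le_trans hy.2.le hs.2⟩, by simp [ne_of_lt hy.2]⟩
      have : s ∈ closure (Set.Ico a s) := by
        rw [closure_Ico (ne_of_lt h')]; exact ⟨h'.le, le_refl s⟩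
      exact closure_mono hsub this
  have htend : Tendsto (fun y => |slope f s y|) (𝓝[Set.Icc a b \ {s}] s) (𝓝 |d|) := hd.abs
  refine le_of_tendsto htend ?_
  refine Filter.eventually_of_mem self_mem_nhdsWithin fun y hy => ?_
  have hys : y ≠ s := fun h => hy.2 (by simp [h])
  rw [slope_def_field, abs_div]
  rw [div_le_iff₀ (abs_pos.mpr (sub_ne_zero.mpr hys))]
  have := hlip.dist_le_mul _ hy.1 _ hs
  simpa [Real.dist_eq] using this


lemma abs_le_one_of_mem01 {a : ℝ} (h : a ∈ Set.Icc (0:ℝ) 1) : |a| ≤ 1 :=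
  abs_le.mpr ⟨by linarith [h.1], h.2⟩

lemma abs_one_sub_le_one {a : ℝ} (h : a ∈ Set.Icc (0:ℝ) 1) : |1 - a| ≤ 1 :=
  abs_le.mpr ⟨by linarith [h.2], by linarith [h.1]⟩

lemma abs_sub_le_one01 {a b : ℝ} (ha : a ∈ Set.Icc (0:ℝ) 1) (hb : b ∈ Set.Icc (0:ℝ) 1) :
    |a - b| ≤ 1 :=
  abs_le.mpr ⟨by linarith [ha.1, hb.2], by linarith [ha.2, hb.1]⟩

lemma intervalIntegrable_of_bdd {a b M : ℝ} {f : ℝ → ℝ} (hab : a ≤ b)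
    (hm : AEStronglyMeasurable f (volume.restrict (Set.Ioc a b)))
    (hb : ∀ l ∈ Set.Ioc a b, |f l| ≤ M) : IntervalIntegrable f volume a b := by
  rw [intervalIntegrable_iff_integrableOn_Ioc_of_le hab]
  refine Integrable.mono' (g := fun _ => M) ?_ hm ?_
  · exact integrableOn_const measure_Ioc_lt_top.ne
  · filter_upwards [self_mem_ae_restrict measurableSet_Ioc] with x hx
    simpa [Real.norm_eq_abs] using hb x hx

theorem aux_main (θlow θhigh Lbar : ℝ) (hθ : θlow < θhigh) (hL : 0 < Lbar)
    (gF gInF : ℝ → ℝ → ℝ)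
    (hgF_bd : ∀ θ ∈ Set.Icc θlow θhigh, ∀ l ∈ Set.Icc (0:ℝ) Lbar, gF θ l ∈ Set.Icc (0:ℝ) 1)
    (hgInF_bd : ∀ θ ∈ Set.Icc θlow θhigh, ∀ l ∈ Set.Icc (0:ℝ) Lbar, gInF θ l ∈ Set.Icc (0:ℝ) 1)
    (hgF_meas : Measurable (Function.uncurry gF))
    (hgInF_meas : Measurable (Function.uncurry gInF))
    (r : ℝ → ℝ → ℝ) (hr_meas : Measurable (Function.uncurry r))
    (hr_bd : ∀ θ ∈ Set.Icc θlow θhigh, ∀ l ∈ Set.Icc (0:ℝ) Lbar, r θ l ∈ Set.Icc (0:ℝ) 1)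
    (q : ℝ → ℝ) (hq_cont : Continuous q)
    (hq_int : (∫ s in θlow..θhigh, q s) = 1)
    (D : ℝ → ℝ → ℝ) (C : ℝ) (hC : 0 ≤ C)
    (hDbd : ∀ s ∈ Set.Icc θlow θhigh, ∀ l ∈ Set.Icc (0:ℝ) Lbar, |D s l| ≤ C)
    (hD_meas : Measurable (Function.uncurry D))
    (PA : ℝ) (p : ℝ → ℝ)
    (hstar : ∀ θ ∈ Set.Icc θlow θhigh,
      p θ = PA - (∫ s in θlow..θ, ∫ l in (0:ℝ)..Lbar, D s l * r s l)
        - ∫ l in (0:ℝ)..Lbar, (1 - gF θ l) * r θ l) :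
    (∫ θ in θlow..θhigh, (p θ - ∫ l in (0:ℝ)..Lbar, (1 - gInF θ l) * (1 - r θ l)) * q θ)
      = PA - (∫ θ in θlow..θhigh, ∫ l in (0:ℝ)..Lbar, (1 - gInF θ l) * q θ)
        - ∫ θ in θlow..θhigh, ∫ l in (0:ℝ)..Lbar,
            ((gInF θ l - gF θ l) * q θ + D θ l * (∫ s in θ..θhigh, q s)) * r θ l := by
  have hle : θlow ≤ θhigh := hθ.le
  have hL0 : (0:ℝ) ≤ Lbar := hL.le
  obtain ⟨Mq, hMq⟩ := isCompact_Icc.exists_bound_of_continuousOn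
    (hq_cont.continuousOn : ContinuousOn q (Set.Icc θlow θhigh))
  have hMq' : ∀ x ∈ Set.Icc θlow θhigh, |q x| ≤ Mq := by
    intro x hx; simpa [Real.norm_eq_abs] using hMq x hx
  have hMq0 : 0 ≤ Mq := le_trans (abs_nonneg _) (hMq' θlow ⟨le_refl _, hle⟩)
  -- section measurability
  have msec : ∀ {f : ℝ → ℝ → ℝ}, Measurable (Function.uncurry f) → ∀ θ, Measurable (f θ) :=
    fun hf θ => hf.comp (measurable_const.prodMk measurable_id)
  -- interval integrability in l
  have i_gFr : ∀ θ ∈ Set.Icc θlow θhigh,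
      IntervalIntegrable (fun l => (1 - gF θ l) * r θ l) volume 0 Lbar := by
    intro θ hθm
    refine intervalIntegrable_of_bdd hL0
      (((measurable_const.sub (msec hgF_meas θ)).mul (msec hr_meas θ)).aestronglyMeasurable)
      (M := 1) fun l hl => ?_
    have h1 := abs_one_sub_le_one (hgF_bd θ hθm l (Set.Ioc_subset_Icc_self hl))
    have h2 := abs_le_one_of_mem01 (hr_bd θ hθm l (Set.Ioc_subset_Icc_self hl))
    rw [abs_mul]
    nlinarith [abs_nonneg (1 - gF θ l), abs_nonneg (r θ l)]
  have i_gInFr : ∀ θ ∈ Set.Icc θlow θhigh,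
      IntervalIntegrable (fun l => (1 - gInF θ l) * (1 - r θ l)) volume 0 Lbar := by
    intro θ hθm
    refine intervalIntegrable_of_bdd hL0
      (((measurable_const.sub (msec hgInF_meas θ)).mul
        (measurable_const.sub (msec hr_meas θ))).aestronglyMeasurable)
      (M := 1) fun l hl => ?_
    have h1 := abs_one_sub_le_one (hgInF_bd θ hθm l (Set.Ioc_subset_Icc_self hl))
    have h2 := abs_one_sub_le_one (hr_bd θ hθm l (Set.Ioc_subset_Icc_self hl))
    rw [abs_mul]
    nlinarith [abs_nonneg (1 - gInF θ l), abs_nonneg (1 - r θ l)]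
  have i_gInF : ∀ θ ∈ Set.Icc θlow θhigh,
      IntervalIntegrable (fun l => (1 - gInF θ l)) volume 0 Lbar := by
    intro θ hθm
    refine intervalIntegrable_of_bdd hL0
      ((measurable_const.sub (msec hgInF_meas θ)).aestronglyMeasurable)
      (M := 1) fun l hl => ?_
    exact abs_one_sub_le_one (hgInF_bd θ hθm l (Set.Ioc_subset_Icc_self hl))
  have i_diffr : ∀ θ ∈ Set.Icc θlow θhigh,
      IntervalIntegrable (fun l => (gInF θ l - gF θ l) * r θ l) volume 0 Lbar := by
    intro θ hθm
    refine intervalIntegrable_of_bdd hL0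
      ((((msec hgInF_meas θ).sub (msec hgF_meas θ)).mul (msec hr_meas θ)).aestronglyMeasurable)
      (M := 1) fun l hl => ?_
    have h1 := abs_sub_le_one01 (hgInF_bd θ hθm l (Set.Ioc_subset_Icc_self hl))
      (hgF_bd θ hθm l (Set.Ioc_subset_Icc_self hl))
    have h2 := abs_le_one_of_mem01 (hr_bd θ hθm l (Set.Ioc_subset_Icc_self hl))
    rw [abs_mul]
    nlinarith [abs_nonneg (gInF θ l - gF θ l), abs_nonneg (r θ l)]
  have i_Dr : ∀ θ ∈ Set.Icc θlow θhigh,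
      IntervalIntegrable (fun l => D θ l * r θ l) volume 0 Lbar := by
    intro θ hθm
    refine intervalIntegrable_of_bdd hL0
      (((msec hD_meas θ).mul (msec hr_meas θ)).aestronglyMeasurable)
      (M := C) fun l hl => ?_
    have h1 := hDbd θ hθm l (Set.Ioc_subset_Icc_self hl)
    have h2 := abs_le_one_of_mem01 (hr_bd θ hθm l (Set.Ioc_subset_Icc_self hl))
    rw [abs_mul]
    nlinarith [abs_nonneg (D θ l), abs_nonneg (r θ l)]
  -- measurability of parametrized integrals
  have meas_param : ∀ {f : ℝ → ℝ → ℝ}, Measurable (Function.uncurry f) →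
      Measurable (fun θ => ∫ l in (0:ℝ)..Lbar, f θ l) := by
    intro f hf
    have h1 : (fun θ => ∫ l in (0:ℝ)..Lbar, f θ l)
        = fun θ => ∫ l in Set.Ioc (0:ℝ) Lbar, f θ l := by
      funext θ; exact intervalIntegral.integral_of_le hL0
    rw [h1]
    exact hf.stronglyMeasurable.integral_prod_right'.measurable
  have hφ_meas : Measurable (fun s => ∫ l in (0:ℝ)..Lbar, D s l * r s l) :=
    meas_param (f := fun s l => D s l * r s l) (hD_meas.mul hr_meas)
  have hW_meas : Measurable (fun θ => ∫ l in (0:ℝ)..Lbar, (1 - gInF θ l)) :=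
    meas_param (f := fun θ l => 1 - gInF θ l) (measurable_const.sub hgInF_meas)
  have hU_meas : Measurable (fun θ => ∫ l in (0:ℝ)..Lbar, (gInF θ l - gF θ l) * r θ l) :=
    meas_param (f := fun θ l => (gInF θ l - gF θ l) * r θ l)
      ((hgInF_meas.sub hgF_meas).mul hr_meas)
  -- bounds on parametrized integrals
  have hφ_bd : ∀ s ∈ Set.Icc θlow θhigh, |∫ l in (0:ℝ)..Lbar, D s l * r s l| ≤ C * Lbar := by
    intro s hs
    have h := intervalIntegral.norm_integral_le_of_norm_le_const
      (C := C) (f := fun l => D s l * r s l) (a := 0) (b := Lbar) ?_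
    · simpa [Real.norm_eq_abs, abs_of_nonneg hL0] using h
    · intro l hl
      rw [Set.uIoc_of_le hL0] at hl
      have h1 := hDbd s hs l (Set.Ioc_subset_Icc_self hl)
      have h2 := abs_le_one_of_mem01 (hr_bd s hs l (Set.Ioc_subset_Icc_self hl))
      rw [Real.norm_eq_abs, abs_mul]
      nlinarith [abs_nonneg (D s l), abs_nonneg (r s l)]
  have hW_bd : ∀ θ ∈ Set.Icc θlow θhigh, |∫ l in (0:ℝ)..Lbar, (1 - gInF θ l)| ≤ Lbar := by
    intro θ hθm
    have h := intervalIntegral.norm_integral_le_of_norm_le_const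
      (C := 1) (f := fun l => (1 - gInF θ l)) (a := 0) (b := Lbar) ?_
    · simpa [Real.norm_eq_abs, abs_of_nonneg hL0] using h
    · intro l hl
      rw [Set.uIoc_of_le hL0] at hl
      rw [Real.norm_eq_abs]
      exact abs_one_sub_le_one (hgInF_bd θ hθm l (Set.Ioc_subset_Icc_self hl))
  have hU_bd : ∀ θ ∈ Set.Icc θlow θhigh,
      |∫ l in (0:ℝ)..Lbar, (gInF θ l - gF θ l) * r θ l| ≤ Lbar := by
    intro θ hθm
    have h := intervalIntegral.norm_integral_le_of_norm_le_const
      (C := 1) (f := fun l => (gInF θ l - gF θ l) * r θ l) (a := 0) (b := Lbar) ?_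
    · simpa [Real.norm_eq_abs, abs_of_nonneg hL0] using h
    · intro l hl
      rw [Set.uIoc_of_le hL0] at hl
      have h1 := abs_sub_le_one01 (hgInF_bd θ hθm l (Set.Ioc_subset_Icc_self hl))
        (hgF_bd θ hθm l (Set.Ioc_subset_Icc_self hl))
      have h2 := abs_le_one_of_mem01 (hr_bd θ hθm l (Set.Ioc_subset_Icc_self hl))
      rw [Real.norm_eq_abs, abs_mul]
      nlinarith [abs_nonneg (gInF θ l - gF θ l), abs_nonneg (r θ l)]
  have hQ_bd : ∀ s ∈ Set.Icc θlow θhigh, |∫ t in s..θhigh, q t| ≤ Mq * (θhigh - θlow) := by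
    intro s hs
    have h := intervalIntegral.norm_integral_le_of_norm_le_const
      (C := Mq) (f := q) (a := s) (b := θhigh) ?_
    · rw [Real.norm_eq_abs] at h
      refine le_trans h ?_
      have : |θhigh - s| = θhigh - s := abs_of_nonneg (by linarith [hs.2])
      rw [this]
      nlinarith [hs.1]
    · intro t ht
      rw [Set.uIoc_of_le hs.2] at ht
      rw [Real.norm_eq_abs]
      exact hMq' t ⟨le_trans hs.1 ht.1.le, ht.2⟩
  -- continuity of Q
  have hQ_cont : Continuous (fun s => ∫ t in s..θhigh, q t) := by
    have h1 : (fun s : ℝ => ∫ t in s..θhigh, q t)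
        = fun s => (∫ t in θlow..θhigh, q t) - ∫ t in θlow..s, q t := by
      funext s
      rw [← intervalIntegral.integral_add_adjacent_intervals
        (hq_cont.intervalIntegrable θlow s) (hq_cont.intervalIntegrable s θhigh)]
      ring
    rw [h1]
    exact continuous_const.sub
      (intervalIntegral.continuous_primitive (fun a b => hq_cont.intervalIntegrable a b) θlow)
  -- interval integrability of φ over Θ and continuity of its primitive
  have hφ_ii : IntervalIntegrable (fun s => ∫ l in (0:ℝ)..Lbar, D s l * r s l)
      volume θlow θhigh :=
    intervalIntegrable_of_bdd hle hφ_meas.aestronglyMeasurable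
      (fun s hs => hφ_bd s (Set.Ioc_subset_Icc_self hs))
  have hI_cont : ContinuousOn
      (fun θ => ∫ s in θlow..θ, ∫ l in (0:ℝ)..Lbar, D s l * r s l) (Set.Icc θlow θhigh) := by
    have h := intervalIntegral.continuousOn_primitive_interval' hφ_ii
      (Set.left_mem_uIcc (a := θlow) (b := θhigh))
    rwa [Set.uIcc_of_le hle] at h
  -- interval integrability of the θ-integrands
  have hq_ii : IntervalIntegrable q volume θlow θhigh := hq_cont.intervalIntegrable θlow θhigh
  have hPAq_ii : IntervalIntegrable (fun θ => PA * q θ) volume θlow θhigh :=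
    hq_ii.const_mul PA
  have hIq_ii : IntervalIntegrable
      (fun θ => (∫ s in θlow..θ, ∫ l in (0:ℝ)..Lbar, D s l * r s l) * q θ)
      volume θlow θhigh := by
    apply ContinuousOn.intervalIntegrable
    rw [Set.uIcc_of_le hle]
    exact hI_cont.mul hq_cont.continuousOn
  have hWq_ii : IntervalIntegrable
      (fun θ => (∫ l in (0:ℝ)..Lbar, (1 - gInF θ l)) * q θ) volume θlow θhigh := by
    refine intervalIntegrable_of_bdd hle
      ((hW_meas.mul hq_cont.measurable).aestronglyMeasurable)
      (M := Lbar * Mq) fun θ hθm => ?_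
    have h1 := hW_bd θ (Set.Ioc_subset_Icc_self hθm)
    have h2 := hMq' θ (Set.Ioc_subset_Icc_self hθm)
    rw [abs_mul]
    nlinarith [abs_nonneg (∫ l in (0:ℝ)..Lbar, (1 - gInF θ l)), abs_nonneg (q θ)]
  have hUq_ii : IntervalIntegrable
      (fun θ => (∫ l in (0:ℝ)..Lbar, (gInF θ l - gF θ l) * r θ l) * q θ) volume θlow θhigh := by
    refine intervalIntegrable_of_bdd hle
      ((hU_meas.mul hq_cont.measurable).aestronglyMeasurable)
      (M := Lbar * Mq) fun θ hθm => ?_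
    have h1 := hU_bd θ (Set.Ioc_subset_Icc_self hθm)
    have h2 := hMq' θ (Set.Ioc_subset_Icc_self hθm)
    rw [abs_mul]
    nlinarith [abs_nonneg (∫ l in (0:ℝ)..Lbar, (gInF θ l - gF θ l) * r θ l), abs_nonneg (q θ)]
  have hφQ_ii : IntervalIntegrable
      (fun θ => (∫ l in (0:ℝ)..Lbar, D θ l * r θ l) * (∫ s in θ..θhigh, q s))
      volume θlow θhigh := by
    refine intervalIntegrable_of_bdd hle
      ((hφ_meas.mul hQ_cont.measurable).aestronglyMeasurable)
      (M := (C * Lbar) * (Mq * (θhigh - θlow))) fun θ hθm => ?_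
    have h1 := hφ_bd θ (Set.Ioc_subset_Icc_self hθm)
    have h2 := hQ_bd θ (Set.Ioc_subset_Icc_self hθm)
    rw [abs_mul]
    nlinarith [abs_nonneg (∫ l in (0:ℝ)..Lbar, D θ l * r θ l),
      abs_nonneg (∫ s in θ..θhigh, q s)]
  -- Step A: pointwise rewriting of the integrand
  have stepA : (∫ θ in θlow..θhigh,
        (p θ - ∫ l in (0:ℝ)..Lbar, (1 - gInF θ l) * (1 - r θ l)) * q θ)
      = ∫ θ in θlow..θhigh,
          (PA * q θ
            - (∫ s in θlow..θ, ∫ l in (0:ℝ)..Lbar, D s l * r s l) * q θ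
            - (∫ l in (0:ℝ)..Lbar, (1 - gInF θ l)) * q θ
            - (∫ l in (0:ℝ)..Lbar, (gInF θ l - gF θ l) * r θ l) * q θ) := by
    apply intervalIntegral.integral_congr
    intro θ hθm
    rw [Set.uIcc_of_le hle] at hθm
    have hsplit : (∫ l in (0:ℝ)..Lbar, (1 - gF θ l) * r θ l)
          + (∫ l in (0:ℝ)..Lbar, (1 - gInF θ l) * (1 - r θ l))
        = (∫ l in (0:ℝ)..Lbar, (1 - gInF θ l))
          + ∫ l in (0:ℝ)..Lbar, (gInF θ l - gF θ l) * r θ l := by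
      rw [← intervalIntegral.integral_add (i_gFr θ hθm) (i_gInFr θ hθm),
        ← intervalIntegral.integral_add (i_gInF θ hθm) (i_diffr θ hθm)]
      apply intervalIntegral.integral_congr
      intro l _
      ring
    have hcalc : (p θ - ∫ l in (0:ℝ)..Lbar, (1 - gInF θ l) * (1 - r θ l))
        = PA - (∫ s in θlow..θ, ∫ l in (0:ℝ)..Lbar, D s l * r s l)
          - (∫ l in (0:ℝ)..Lbar, (1 - gInF θ l))
          - ∫ l in (0:ℝ)..Lbar, (gInF θ l - gF θ l) * r θ l := by
      rw [hstar θ hθm]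
      linarith [hsplit]
    simp only []
    rw [hcalc]
    ring
  rw [stepA]
  rw [intervalIntegral.integral_sub ((hPAq_ii.sub hIq_ii).sub hWq_ii) hUq_ii,
    intervalIntegral.integral_sub (hPAq_ii.sub hIq_ii) hWq_ii,
    intervalIntegral.integral_sub hPAq_ii hIq_ii,
    intervalIntegral.integral_const_mul, hq_int, mul_one]
  -- Step C: Fubini
  have stepC : (∫ θ in θlow..θhigh,
        (∫ s in θlow..θ, ∫ l in (0:ℝ)..Lbar, D s l * r s l) * q θ)
      = ∫ s in θlow..θhigh,
          (∫ l in (0:ℝ)..Lbar, D s l * r s l) * (∫ t in s..θhigh, q t) := by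
    rw [intervalIntegral.integral_of_le hle, intervalIntegral.integral_of_le hle]
    set T := Set.Ioc θlow θhigh with hT
    set φ : ℝ → ℝ := fun s => ∫ l in (0:ℝ)..Lbar, D s l * r s l with hφ
    haveI : IsFiniteMeasure (volume.restrict T) :=
      ⟨by rw [Measure.restrict_apply_univ]; exact measure_Ioc_lt_top⟩
    have hK_int : Integrable (Function.uncurry fun θ s => (if s ≤ θ then φ s else 0) * q θ)
        ((volume.restrict T).prod (volume.restrict T)) := by
      refine Integrable.mono' (integrable_const ((C * Lbar) * Mq)) ?_ ?_
      · exact ((Measurable.ite (measurableSet_le measurable_snd measurable_fst)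
          (hφ_meas.comp measurable_snd) measurable_const).mul
          (hq_cont.measurable.comp measurable_fst)).aestronglyMeasurable
      · rw [Measure.prod_restrict]
        filter_upwards [self_mem_ae_restrict (measurableSet_Ioc.prod measurableSet_Ioc)]
          with z hz
        have hz1 : z.1 ∈ Set.Icc θlow θhigh := Set.Ioc_subset_Icc_self hz.1
        have hz2 : z.2 ∈ Set.Icc θlow θhigh := Set.Ioc_subset_Icc_self hz.2
        have h1 : |if z.2 ≤ z.1 then φ z.2 else 0| ≤ C * Lbar := by
          split
          · exact hφ_bd z.2 hz2
          · simp only [abs_zero]; positivity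
        have h2 := hMq' z.1 hz1
        show |(if z.2 ≤ z.1 then φ z.2 else 0) * q z.1| ≤ (C * Lbar) * Mq
        rw [abs_mul]
        nlinarith [abs_nonneg (if z.2 ≤ z.1 then φ z.2 else 0), abs_nonneg (q z.1)]
    have swap := MeasureTheory.integral_integral_swap hK_int
    have hleft : (∫ θ in T, (∫ s in θlow..θ, φ s) * q θ)
        = ∫ θ in T, ∫ s in T, (if s ≤ θ then φ s else 0) * q θ := by
      refine setIntegral_congr_fun measurableSet_Ioc fun θ hθm => ?_
      have e0 : (∫ s in T, (if s ≤ θ then φ s else 0)) = ∫ s in θlow..θ, φ s := by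
        have e1 : ∀ s : ℝ, (if s ≤ θ then φ s else 0) = (Set.Iic θ).indicator φ s := by
          intro s; simp [Set.indicator_apply, Set.mem_Iic]
        simp_rw [e1]
        rw [setIntegral_indicator measurableSet_Iic]
        have e2 : T ∩ Set.Iic θ = Set.Ioc θlow θ := by
          rw [hT, Set.Ioc_inter_Iic, min_eq_right hθm.2]
        rw [e2, ← intervalIntegral.integral_of_le hθm.1.le]
      calc (∫ s in θlow..θ, φ s) * q θ
          = (∫ s in T, (if s ≤ θ then φ s else 0)) * q θ := by rw [e0]
        _ = ∫ s in T, (if s ≤ θ then φ s else 0) * q θ :=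
            (integral_mul_const (q θ) _).symm
    have hright : (∫ s in T, φ s * (∫ t in s..θhigh, q t))
        = ∫ s in T, ∫ θ in T, (if s ≤ θ then φ s else 0) * q θ := by
      refine setIntegral_congr_fun measurableSet_Ioc fun s hsm => ?_
      have e0 : ∀ θ : ℝ, (if s ≤ θ then φ s else 0) * q θ
          = (Set.Ici s).indicator (fun θ => φ s * q θ) θ := by
        intro θ
        by_cases h : s ≤ θ <;> simp [Set.indicator_apply, Set.mem_Ici, h]
      have e1 : (∫ θ in T, (if s ≤ θ then φ s else 0) * q θ)
          = ∫ θ in T, (Set.Ici s).indicator (fun θ => φ s * q θ) θ := by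
        simp_rw [e0]
      rw [e1, setIntegral_indicator measurableSet_Ici]
      have e2 : T ∩ Set.Ici s = Set.Icc s θhigh := by
        ext x
        simp only [hT, Set.mem_inter_iff, Set.mem_Ioc, Set.mem_Icc, Set.mem_Ici]
        constructor
        · rintro ⟨⟨_, h2⟩, h3⟩; exact ⟨h3, h2⟩
        · rintro ⟨h1, h2⟩; exact ⟨⟨lt_of_lt_of_le hsm.1 h1, h2⟩, h1⟩
      rw [e2, integral_Icc_eq_integral_Ioc, integral_const_mul,
        ← intervalIntegral.integral_of_le hsm.2]
    rw [hleft, hright]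
    exact swap
  -- Step D
  have stepD : (∫ θ in θlow..θhigh, ∫ l in (0:ℝ)..Lbar,
        ((gInF θ l - gF θ l) * q θ + D θ l * (∫ s in θ..θhigh, q s)) * r θ l)
      = (∫ θ in θlow..θhigh, (∫ l in (0:ℝ)..Lbar, (gInF θ l - gF θ l) * r θ l) * q θ)
        + ∫ θ in θlow..θhigh,
            (∫ l in (0:ℝ)..Lbar, D θ l * r θ l) * (∫ s in θ..θhigh, q s) := by
    rw [← intervalIntegral.integral_add hUq_ii hφQ_ii]
    apply intervalIntegral.integral_congr
    intro θ hθm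
    rw [Set.uIcc_of_le hle] at hθm
    simp only []
    have e1 : (∫ l in (0:ℝ)..Lbar,
          ((gInF θ l - gF θ l) * q θ + D θ l * (∫ s in θ..θhigh, q s)) * r θ l)
        = ∫ l in (0:ℝ)..Lbar,
            (((gInF θ l - gF θ l) * r θ l) * q θ
              + ((D θ l * r θ l) * (∫ s in θ..θhigh, q s))) := by
      apply intervalIntegral.integral_congr
      intro l _
      ring
    rw [e1, intervalIntegral.integral_add ((i_diffr θ hθm).mul_const _)
      ((i_Dr θ hθm).mul_const _),
      intervalIntegral.integral_mul_const, intervalIntegral.integral_mul_const]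
  -- Step E
  have stepE : (∫ θ in θlow..θhigh, ∫ l in (0:ℝ)..Lbar, (1 - gInF θ l) * q θ)
      = ∫ θ in θlow..θhigh, (∫ l in (0:ℝ)..Lbar, (1 - gInF θ l)) * q θ := by
    apply intervalIntegral.integral_congr
    intro θ _
    exact intervalIntegral.integral_mul_const _ _
  rw [stepE, stepD, stepC]
  ring

/-- **Insurer's aggregate utility under incentive compatibility (eq:barV).** If the premia
satisfy the envelope formula (★), then the insurer's total utility equals
`p_{θ̲} + ∫ (1−g_{θ̲}(F_{θ̲})) r_{θ̲} − ∫_Θ ∫₀^{L̄} (1−g^In(F_θ(l))) q(θ) dl dθ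
− ∫_Θ ∫₀^{L̄} [ (g^In(F_θ(l)) − g_θ(F_θ(l))) q(θ) + D(θ,l) Q̄(θ) ] r_θ(l) dl dθ`. -/
theorem insurer_aggregate_utility_identity
    (θlow θhigh Lbar : ℝ) (hθ : θlow < θhigh) (hL : 0 < Lbar)
    (g : ℝ → ℝ → ℝ) (gIn : ℝ → ℝ) (F : ℝ → ℝ → ℝ)
    (hg_mono : ∀ θ ∈ Set.Icc θlow θhigh, MonotoneOn (g θ) (Set.Icc (0 : ℝ) 1))
    (hg0 : ∀ θ ∈ Set.Icc θlow θhigh, g θ 0 = 0)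
    (hg1 : ∀ θ ∈ Set.Icc θlow θhigh, g θ 1 = 1)
    (hg_range : ∀ θ ∈ Set.Icc θlow θhigh, ∀ t ∈ Set.Icc (0 : ℝ) 1,
      g θ t ∈ Set.Icc (0 : ℝ) 1)
    (hgIn_mono : MonotoneOn gIn (Set.Icc (0 : ℝ) 1))
    (hgIn0 : gIn 0 = 0) (hgIn1 : gIn 1 = 1)
    (hgIn_range : ∀ t ∈ Set.Icc (0 : ℝ) 1, gIn t ∈ Set.Icc (0 : ℝ) 1)
    (hF_range : ∀ θ ∈ Set.Icc θlow θhigh, ∀ l ∈ Set.Icc (0 : ℝ) Lbar,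
      F θ l ∈ Set.Icc (0 : ℝ) 1)
    (hgF_meas : Measurable fun x : ℝ × ℝ => g x.1 (F x.1 x.2))
    (hgInF_meas : Measurable fun x : ℝ × ℝ => gIn (F x.1 x.2))
    (r : ℝ → ℝ → ℝ) (p : ℝ → ℝ)
    (hr_meas : Measurable (Function.uncurry r)) (hp_meas : Measurable p)
    (hr_range : ∀ θ ∈ Set.Icc θlow θhigh, ∀ l ∈ Set.Icc (0 : ℝ) Lbar,
      r θ l ∈ Set.Icc (0 : ℝ) 1)
    (q : ℝ → ℝ)
    (hq_cont : ContinuousOn q (Set.Icc θlow θhigh))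
    (hq_nonneg : ∀ θ ∈ Set.Icc θlow θhigh, 0 ≤ q θ)
    (hq_int : (∫ s in θlow..θhigh, q s) = 1)
    (D : ℝ → ℝ → ℝ)
    (hD : ∀ l ∈ Set.Icc (0 : ℝ) Lbar, ∀ s ∈ Set.Icc θlow θhigh,
      HasDerivWithinAt (fun t => g t (F t l)) (D s l) (Set.Icc θlow θhigh) s)
    (hLip : ∃ C : NNReal, ∀ l ∈ Set.Icc (0 : ℝ) Lbar,
      LipschitzOnWith C (fun s => g s (F s l)) (Set.Icc θlow θhigh))
    (hD_meas : Measurable (Function.uncurry D))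
    -- the premium formula (★)
    (hstar : ∀ θ ∈ Set.Icc θlow θhigh,
      p θ = p θlow + (∫ l in (0 : ℝ)..Lbar, (1 - g θlow (F θlow l)) * r θlow l)
        - (∫ s in θlow..θ, ∫ l in (0 : ℝ)..Lbar, D s l * r s l)
        - ∫ l in (0 : ℝ)..Lbar, (1 - g θ (F θ l)) * r θ l) :
    (∫ θ in θlow..θhigh, Vin gIn F Lbar θ (r θ) (p θ) * q θ) =
      p θlow + (∫ l in (0 : ℝ)..Lbar, (1 - g θlow (F θlow l)) * r θlow l) -
        (∫ θ in θlow..θhigh, ∫ l in (0 : ℝ)..Lbar, (1 - gIn (F θ l)) * q θ) -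
        ∫ θ in θlow..θhigh, ∫ l in (0 : ℝ)..Lbar,
          ((gIn (F θ l) - g θ (F θ l)) * q θ +
            D θ l * (∫ s in θ..θhigh, q s)) * r θ l := by
  have hle : θlow ≤ θhigh := hθ.le
  obtain ⟨C, hC⟩ := hLip
  have hDbd : ∀ s ∈ Set.Icc θlow θhigh, ∀ l ∈ Set.Icc (0:ℝ) Lbar, |D s l| ≤ (C:ℝ) :=
    fun s hs l hl => abs_deriv_le_of_lipschitzOnWith hθ (hC l hl) hs (hD l hl s hs)
  set q' : ℝ → ℝ := fun t => q (max θlow (min t θhigh)) with hq'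
  have hq'c : Continuous q' := by
    refine hq_cont.comp_continuous
      (continuous_const.max (continuous_id.min continuous_const)) fun t => ?_
    exact ⟨le_max_left _ _, max_le hle (min_le_right _ _)⟩
  have hq'eq : ∀ t ∈ Set.Icc θlow θhigh, q' t = q t := by
    intro t ht
    simp only [hq']
    rw [min_eq_left ht.2, max_eq_right ht.1]
  have hq_int' : (∫ s in θlow..θhigh, q' s) = 1 := by
    rw [intervalIntegral.integral_congr
      (g := q) (fun t ht => hq'eq t (by rwa [Set.uIcc_of_le hle] at ht))]
    exact hq_int
  have goal_q' := aux_main θlow θhigh Lbar hθ hL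
    (fun θ l => g θ (F θ l)) (fun θ l => gIn (F θ l))
    (fun θ hm l hl => hg_range θ hm _ (hF_range θ hm l hl))
    (fun θ hm l hl => hgIn_range _ (hF_range θ hm l hl))
    hgF_meas hgInF_meas r hr_meas hr_range q' hq'c hq_int' D (C:ℝ) C.coe_nonneg
    hDbd hD_meas
    (p θlow + (∫ l in (0:ℝ)..Lbar, (1 - g θlow (F θlow l)) * r θlow l)) p hstar
  have hT2 : (∫ θ in θlow..θhigh, ∫ l in (0:ℝ)..Lbar, (1 - gIn (F θ l)) * q' θ)
      = ∫ θ in θlow..θhigh, ∫ l in (0:ℝ)..Lbar, (1 - gIn (F θ l)) * q θ := by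
    apply intervalIntegral.integral_congr
    intro θ ht
    rw [Set.uIcc_of_le hle] at ht
    simp only [hq'eq θ ht]
  have hT3 : (∫ θ in θlow..θhigh, ∫ l in (0:ℝ)..Lbar,
        ((gIn (F θ l) - g θ (F θ l)) * q' θ
          + D θ l * (∫ s in θ..θhigh, q' s)) * r θ l)
      = ∫ θ in θlow..θhigh, ∫ l in (0:ℝ)..Lbar,
          ((gIn (F θ l) - g θ (F θ l)) * q θ
            + D θ l * (∫ s in θ..θhigh, q s)) * r θ l := by
    apply intervalIntegral.integral_congr
    intro θ ht
    rw [Set.uIcc_of_le hle] at ht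
    have e2 : (∫ s in θ..θhigh, q' s) = ∫ s in θ..θhigh, q s := by
      apply intervalIntegral.integral_congr
      intro s hs
      rw [Set.uIcc_of_le ht.2] at hs
      exact hq'eq s ⟨le_trans ht.1 hs.1, hs.2⟩
    simp only [hq'eq θ ht, e2]
  calc (∫ θ in θlow..θhigh, Vin gIn F Lbar θ (r θ) (p θ) * q θ)
      = ∫ θ in θlow..θhigh,
          (p θ - ∫ l in (0:ℝ)..Lbar, (1 - gIn (F θ l)) * (1 - r θ l)) * q' θ := by
        apply intervalIntegral.integral_congr
        intro θ ht
        rw [Set.uIcc_of_le hle] at ht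
        simp only [hq'eq θ ht]
        rfl
    _ = (p θlow + (∫ l in (0:ℝ)..Lbar, (1 - g θlow (F θlow l)) * r θlow l))
          - (∫ θ in θlow..θhigh, ∫ l in (0:ℝ)..Lbar, (1 - gIn (F θ l)) * q' θ)
          - ∫ θ in θlow..θhigh, ∫ l in (0:ℝ)..Lbar,
              ((gIn (F θ l) - g θ (F θ l)) * q' θ
                + D θ l * (∫ s in θ..θhigh, q' s)) * r θ l := goal_q'
    _ = _ := by rw [hT2, hT3]
end
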